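/- arXiv:1706.02529 — 6 statements merged into one kernel-verified Lean document; each statement's English description precedes it below -/
import Mathlib

section
/- The algebra G_d, with underlying vector space spanned by symbols x_1,...,x_d and symbols v_{α,β} indexed by pairs (α,β) of d-tuples of nonnegative integers with |α| > 0 and |β| > 0, and multiplication defined by x_i∘x_j = v_{ε_i,ε_j}, x_i∘v_{α,β} = v_{α+ε_i,β}, v_{α,β}∘x_j = v_{α,β+ε_j}, and v_{α,β}∘v_{γ,δ} = v_{α+γ,β+δ}, is a bicommutative algebra. -/
open MvPolynomial

variable (K : Type) [Field K] (ι : Type)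

/-- The ideal of the polynomial ring `K[Y,Z]` (variables `y_i = X (inl i)`,
`z_j = X (inr j)`) generated by the products `y_i * z_j`; its underlying `K`-vector
space is spanned by the monomials `Y^α Z^β` with `|α| > 0` and `|β| > 0`. -/
noncomputable def Vid : Ideal (MvPolynomial (ι ⊕ ι) K) :=
  Ideal.span {p | ∃ i j, p = X (Sum.inl i) * X (Sum.inr j)}

/-- The linear polynomial `∑ a_i y_i`. -/
noncomputable def Yp (a : ι →₀ K) : MvPolynomial (ι ⊕ ι) K :=
  a.sum fun i c => C c * X (Sum.inl i)

/-- The linear polynomial `∑ b_j z_j`. -/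
noncomputable def Zp (b : ι →₀ K) : MvPolynomial (ι ⊕ ι) K :=
  b.sum fun j c => C c * X (Sum.inr j)

/-- The model `G` of the free bicommutative algebra with generators `x_i` indexed
by `ι`: its elements are pairs (linear part in the `x_i`'s, element of the span of
the `v_{α,β} = Y^α Z^β`). -/
abbrev GA : Type := (ι →₀ K) × (Vid K ι)

lemma mul_mem_Vid (a b : ι →₀ K) (p q : MvPolynomial (ι ⊕ ι) K)
    (hp : p ∈ Vid K ι) (hq : q ∈ Vid K ι) :
    (Yp K ι a + p) * (Zp K ι b + q) ∈ Vid K ι := by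
  have hYZ : Yp K ι a * Zp K ι b ∈ Vid K ι := by
    rw [Yp, Zp, Finsupp.sum, Finsupp.sum, Finset.sum_mul_sum]
    refine Submodule.sum_mem _ fun i _ => Submodule.sum_mem _ fun j _ => ?_
    have h : (C (a i) * X (Sum.inl i)) * (C (b j) * X (Sum.inr j))
        = (C (a i) * C (b j)) * (X (Sum.inl i) * X (Sum.inr j) :
          MvPolynomial (ι ⊕ ι) K) := by ring
    rw [h]
    exact Ideal.mul_mem_left _ _ (Ideal.subset_span ⟨i, j, rfl⟩)
  have e : (Yp K ι a + p) * (Zp K ι b + q)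
      = Yp K ι a * Zp K ι b + (Yp K ι a * q + (p * Zp K ι b + p * q)) := by ring
  rw [e]
  exact add_mem hYZ (add_mem (Ideal.mul_mem_left _ _ hq)
    (add_mem (Ideal.mul_mem_right _ _ hp) (Ideal.mul_mem_left _ _ hq)))

/-- The multiplication of `G`: `x_i ∘ x_j = y_i z_j`, `x_i ∘ v_{α,β} = v_{α+ε_i,β}`,
`v_{α,β} ∘ x_j = v_{α,β+ε_j}`, `v_{α,β} ∘ v_{γ,δ} = v_{α+γ,β+δ}`, extended bilinearly. -/
noncomputable instance : Mul (GA K ι) :=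
  ⟨fun u v => (0, ⟨(Yp K ι u.1 + (u.2 : MvPolynomial (ι ⊕ ι) K)) *
      (Zp K ι v.1 + (v.2 : MvPolynomial (ι ⊕ ι) K)),
    mul_mem_Vid K ι u.1 v.1 _ _ u.2.2 v.2.2⟩)⟩

/-- The generator `x_i` of `G`. -/
noncomputable def xE (i : ι) : GA K ι := (Finsupp.single i 1, 0)

/-- The basis element `v_{α,β}` of `G²`, as a predicate on elements of `G`. -/
def IsVElem (w : GA K ι) (α β : ι →₀ ℕ) : Prop :=
  w.1 = 0 ∧ (w.2 : MvPolynomial (ι ⊕ ι) K) = monomial (Finsupp.sumElim α β) 1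

/-- The square `G²` of `G`: the linear span of all products. -/
noncomputable def Gsq : Submodule K (GA K ι) := Submodule.span K {w | ∃ u v : GA K ι, w = u * v}

/-- Two-sided ideals of the (nonassociative) algebra `G`: `K`-subspaces absorbing
multiplication on both sides. -/
def IsTwoSidedIdeal (I : Submodule K (GA K ι)) : Prop :=
  ∀ (a : GA K ι), ∀ x ∈ I, a * x ∈ I ∧ x * a ∈ I

/-- The algebra `G_d` (with basis `x_1,…,x_d` and `v_{α,β}`, `|α|,|β| > 0`, and the
multiplication above) is bicommutative: it satisfies both
`x₁(x₂x₃) = x₂(x₁x₃)` and `(x₁x₂)x₃ = (x₁x₃)x₂`. -/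
theorem Gd_is_bicommutative (d : ℕ) :
    (∀ u v w : GA K (Fin d), u * (v * w) = v * (u * w)) ∧
    (∀ u v w : GA K (Fin d), (u * v) * w = (u * w) * v) := by
  have hmul : ∀ u v : GA K (Fin d), ((u * v).1 = 0 ∧
      ((u * v).2 : MvPolynomial (Fin d ⊕ Fin d) K) =
        (Yp K (Fin d) u.1 + (u.2 : MvPolynomial (Fin d ⊕ Fin d) K)) *
        (Zp K (Fin d) v.1 + (v.2 : MvPolynomial (Fin d ⊕ Fin d) K))) :=
    fun u v => ⟨rfl, rfl⟩
  have hz : Zp K (Fin d) 0 = 0 := Finsupp.sum_zero_index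
  have hy : Yp K (Fin d) 0 = 0 := Finsupp.sum_zero_index
  constructor <;> intro u v w <;>
    refine Prod.ext ((hmul _ _).1.trans (hmul _ _).1.symm) (Subtype.ext ?_) <;>
    rw [(hmul _ _).2, (hmul _ _).2, (hmul _ _).2, (hmul _ _).2,
      (hmul _ _).1, (hmul _ _).1]
  all_goals simp only [hz, hy]; ring
end

section
/- In the algebra G_d defined above, the square G_d² (the span of all products) equals the span of the elements v_{α,β} with |α|, |β| > 0, and G_d² is a commutative and associative subalgebra of G_d. -/
open MvPolynomial

variable (K : Type) [Field K] (ι : Type)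

section Aux

variable (K : Type) [Field K] (ι : Type)
open MvPolynomial

lemma sumElim_add' (α β γ δ : ι →₀ ℕ) :
    Finsupp.sumElim (α + γ) (β + δ) = Finsupp.sumElim α β + Finsupp.sumElim γ δ := by
  ext x; cases x <;> simp

lemma sumElim_decomp (e : ι ⊕ ι →₀ ℕ) :
    ∃ γ δ : ι →₀ ℕ, e = Finsupp.sumElim γ δ := by
  refine ⟨(Finsupp.sumFinsuppEquivProdFinsupp e).1,
    (Finsupp.sumFinsuppEquivProdFinsupp e).2, ?_⟩
  ext x
  cases x with
  | inl i => simp [Finsupp.fst_sumFinsuppEquivProdFinsupp]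
  | inr j => simp [Finsupp.snd_sumFinsuppEquivProdFinsupp]

lemma sumElim_singles (i j : ι) :
    Finsupp.single (Sum.inl i) 1 + Finsupp.single (Sum.inr j) 1
      = Finsupp.sumElim (Finsupp.single i 1) (Finsupp.single j 1) := by
  ext x
  cases x <;> simp [Finsupp.single_apply_left Sum.inl_injective, Finsupp.single_apply_left Sum.inr_injective, Finsupp.single_apply]

end Aux
section Aux2
variable (K : Type) [Field K] (ι : Type)
open MvPolynomial

lemma good_mem_Vid (α β : ι →₀ ℕ) (hα : α ≠ 0) (hβ : β ≠ 0) :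
    (monomial (Finsupp.sumElim α β) 1 : MvPolynomial (ι ⊕ ι) K) ∈ Vid K ι := by
  obtain ⟨i, hi⟩ := Finsupp.ne_iff.1 hα
  obtain ⟨j, hj⟩ := Finsupp.ne_iff.1 hβ
  simp only [Finsupp.coe_zero, Pi.zero_apply] at hi hj
  set e' : ι ⊕ ι →₀ ℕ :=
    Finsupp.sumElim (α - Finsupp.single i 1) (β - Finsupp.single j 1) with he'
  have hidx : Finsupp.sumElim α β
      = e' + (Finsupp.single (Sum.inl i) 1 + Finsupp.single (Sum.inr j) 1) := by
    ext x
    cases x with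
    | inl k =>
      have h2 : (Finsupp.single (Sum.inr j) 1 : ι ⊕ ι →₀ ℕ) (Sum.inl k) = 0 :=
        Finsupp.single_eq_of_ne (by simp)
      simp only [Finsupp.sumElim_inl, Finsupp.coe_add, Pi.add_apply, he',
        Finsupp.tsub_apply, Finsupp.single_apply_left Sum.inl_injective,
        Finsupp.single_apply, h2]
      by_cases h : i = k
      · subst h; simp; omega
      · simp [h]
    | inr k =>
      have h2 : (Finsupp.single (Sum.inl i) 1 : ι ⊕ ι →₀ ℕ) (Sum.inr k) = 0 :=
        Finsupp.single_eq_of_ne (by simp)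
      simp only [Finsupp.sumElim_inr, Finsupp.coe_add, Pi.add_apply, he',
        Finsupp.tsub_apply, Finsupp.single_apply_left Sum.inr_injective,
        Finsupp.single_apply, h2]
      by_cases h : j = k
      · subst h; simp; omega
      · simp [h]
  have hkey : (monomial (Finsupp.sumElim α β) 1 : MvPolynomial (ι ⊕ ι) K)
      = monomial e' 1 * (X (Sum.inl i) * X (Sum.inr j)) := by
    rw [X, X, monomial_mul, monomial_mul, one_mul, one_mul, ← add_assoc, hidx, add_assoc]
  rw [hkey]
  exact Ideal.mul_mem_left _ _ (Ideal.subset_span ⟨i, j, rfl⟩)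

end Aux2
section Aux3
variable (K : Type) [Field K] (ι : Type)
open MvPolynomial

/-- The set of "good" monomials. -/
def GM : Set (MvPolynomial (ι ⊕ ι) K) :=
  {q | ∃ α β : ι →₀ ℕ, α ≠ 0 ∧ β ≠ 0 ∧ q = monomial (Finsupp.sumElim α β) 1}

lemma sumElim_add_ne_zero {γ α : ι →₀ ℕ} (hα : α ≠ 0) : γ + α ≠ 0 := by
  intro h
  apply hα
  ext k
  have := DFunLike.congr_fun h k
  simp only [Finsupp.coe_add, Pi.add_apply, Finsupp.coe_zero, Pi.zero_apply] at this ⊢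
  omega

lemma mul_good_mem (r : MvPolynomial (ι ⊕ ι) K) (α β : ι →₀ ℕ) (hα : α ≠ 0) (hβ : β ≠ 0) :
    r * monomial (Finsupp.sumElim α β) 1 ∈ Submodule.span K (GM K ι) := by
  induction r using MvPolynomial.induction_on' with
  | monomial u a =>
    obtain ⟨γ, δ, hu⟩ := sumElim_decomp ι u
    rw [monomial_mul, mul_one, hu, ← sumElim_add' ι]
    have h : (monomial (Finsupp.sumElim (γ + α) (δ + β)) a : MvPolynomial (ι ⊕ ι) K)
        = a • monomial (Finsupp.sumElim (γ + α) (δ + β)) 1 := by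
      rw [smul_monomial, smul_eq_mul, mul_one]
    rw [h]
    exact Submodule.smul_mem _ _ (Submodule.subset_span
      ⟨γ + α, δ + β, sumElim_add_ne_zero ι hα, sumElim_add_ne_zero ι hβ, rfl⟩)
  | add p q hp hq =>
    rw [add_mul]
    exact Submodule.add_mem _ hp hq

lemma mul_mem_KS (r p : MvPolynomial (ι ⊕ ι) K) (hp : p ∈ Submodule.span K (GM K ι)) :
    r * p ∈ Submodule.span K (GM K ι) := by
  induction hp using Submodule.span_induction with
  | mem q hq =>
    obtain ⟨α, β, hα, hβ, rfl⟩ := hq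
    exact mul_good_mem K ι r α β hα hβ
  | zero => rw [mul_zero]; exact Submodule.zero_mem _
  | add x y hx hy ihx ihy => rw [mul_add]; exact Submodule.add_mem _ ihx ihy
  | smul c x hx ihx => rw [mul_smul_comm]; exact Submodule.smul_mem _ _ ihx

lemma Vid_le_KS (p : MvPolynomial (ι ⊕ ι) K) (hp : p ∈ Vid K ι) :
    p ∈ Submodule.span K (GM K ι) := by
  induction hp using Submodule.span_induction with
  | mem q hq =>
    obtain ⟨i, j, rfl⟩ := hq
    apply Submodule.subset_span
    refine ⟨Finsupp.single i 1, Finsupp.single j 1,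
      fun h => one_ne_zero (Finsupp.single_eq_zero.1 h), fun h => one_ne_zero (Finsupp.single_eq_zero.1 h), ?_⟩
    rw [X, X, monomial_mul, one_mul, sumElim_singles]
  | zero => exact Submodule.zero_mem _
  | add x y hx hy ihx ihy => exact Submodule.add_mem _ ihx ihy
  | smul c x hx ihx => rw [smul_eq_mul]; exact mul_mem_KS K ι c x ihx

lemma KS_le_Vid (p : MvPolynomial (ι ⊕ ι) K) (hp : p ∈ Submodule.span K (GM K ι)) :
    p ∈ Vid K ι := by
  have : Submodule.span K (GM K ι) ≤ (Vid K ι).restrictScalars K := by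
    rw [Submodule.span_le]
    rintro q ⟨α, β, hα, hβ, rfl⟩
    exact good_mem_Vid K ι α β hα hβ
  exact this hp

end Aux3
section Aux4
variable (K : Type) [Field K] (ι : Type)
open MvPolynomial

lemma Yp_zero : Yp K ι 0 = 0 := Finsupp.sum_zero_index

lemma Zp_zero : Zp K ι 0 = 0 := Finsupp.sum_zero_index

lemma Yp_single (i : ι) : Yp K ι (Finsupp.single i 1) = X (Sum.inl i) := by
  rw [Yp, Finsupp.sum_single_index (by rw [map_zero, zero_mul]), map_one, one_mul]

lemma Zp_single (j : ι) : Zp K ι (Finsupp.single j 1) = X (Sum.inr j) := by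
  rw [Zp, Finsupp.sum_single_index (by rw [map_zero, zero_mul]), map_one, one_mul]

lemma mul_fst (u v : GA K ι) : (u * v).1 = 0 := rfl

lemma mul_snd (u v : GA K ι) :
    ((u * v).2 : MvPolynomial (ι ⊕ ι) K)
      = (Yp K ι u.1 + (u.2 : MvPolynomial (ι ⊕ ι) K)) *
        (Zp K ι v.1 + (v.2 : MvPolynomial (ι ⊕ ι) K)) := rfl

/-- The set of basis elements `v_{α,β}` with `α ≠ 0 ≠ β`. -/
def SV : Set (GA K ι) := {w | ∃ α β : ι →₀ ℕ, α ≠ 0 ∧ β ≠ 0 ∧ IsVElem K ι w α β}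

lemma inr_mem_spanSV (p : MvPolynomial (ι ⊕ ι) K) (hp : p ∈ Vid K ι) :
    ((0, ⟨p, hp⟩) : GA K ι) ∈ Submodule.span K (SV K ι) := by
  have hKS := Vid_le_KS K ι p hp
  show ((0, ⟨p, KS_le_Vid K ι p hKS⟩) : GA K ι) ∈ Submodule.span K (SV K ι)
  clear hp
  induction hKS using Submodule.span_induction with
  | mem q hq =>
    obtain ⟨α, β, hα, hβ, rfl⟩ := hq
    exact Submodule.subset_span ⟨α, β, hα, hβ, rfl, rfl⟩
  | zero =>
    have h : ((0, ⟨(0 : MvPolynomial (ι ⊕ ι) K),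
        KS_le_Vid K ι 0 (Submodule.zero_mem _)⟩) : GA K ι) = 0 :=
      Prod.ext rfl (Subtype.ext rfl)
    rw [h]; exact Submodule.zero_mem _
  | add x y hx hy ihx ihy =>
    have h : ((0, ⟨x + y, KS_le_Vid K ι (x + y) (Submodule.add_mem _ hx hy)⟩) : GA K ι)
        = (0, ⟨x, KS_le_Vid K ι x hx⟩) + (0, ⟨y, KS_le_Vid K ι y hy⟩) :=
      Prod.ext (by simp) (Subtype.ext rfl)
    rw [h]; exact Submodule.add_mem _ ihx ihy
  | smul c x hx ihx =>
    have h : ((0, ⟨c • x, KS_le_Vid K ι (c • x) (Submodule.smul_mem _ c hx)⟩) : GA K ι)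
        = c • (0, ⟨x, KS_le_Vid K ι x hx⟩) :=
      Prod.ext (by simp) (Subtype.ext rfl)
    rw [h]; exact Submodule.smul_mem _ _ ihx

lemma single_add_sumElim (α β : ι →₀ ℕ) (i : ι) (hi : α i ≠ 0) :
    Finsupp.single (Sum.inl i) 1 + Finsupp.sumElim (α - Finsupp.single i 1) β
      = Finsupp.sumElim α β := by
  ext x
  cases x with
  | inl k =>
    simp only [Finsupp.coe_add, Pi.add_apply, Finsupp.sumElim_inl, Finsupp.tsub_apply,
      Finsupp.single_apply_left Sum.inl_injective, Finsupp.single_apply]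
    by_cases h : i = k
    · subst h; simp; omega
    · simp [h]
  | inr k =>
    have h2 : (Finsupp.single (Sum.inl i) 1 : ι ⊕ ι →₀ ℕ) (Sum.inr k) = 0 :=
      Finsupp.single_eq_of_ne (by simp)
    simp [h2]

lemma sumElim_add_single (α β : ι →₀ ℕ) (j : ι) (hj : β j ≠ 0) :
    Finsupp.sumElim α (β - Finsupp.single j 1) + Finsupp.single (Sum.inr j) 1
      = Finsupp.sumElim α β := by
  ext x
  cases x with
  | inl k =>
    have h2 : (Finsupp.single (Sum.inr j) 1 : ι ⊕ ι →₀ ℕ) (Sum.inl k) = 0 :=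
      Finsupp.single_eq_of_ne (by simp)
    simp [h2]
  | inr k =>
    simp only [Finsupp.coe_add, Pi.add_apply, Finsupp.sumElim_inr, Finsupp.tsub_apply,
      Finsupp.single_apply_left Sum.inr_injective, Finsupp.single_apply]
    by_cases h : j = k
    · subst h; simp; omega
    · simp [h]

lemma eq_single_of_sub_eq_zero (α : ι →₀ ℕ) (i : ι) (hi : α i ≠ 0)
    (h : α - Finsupp.single i 1 = 0) : α = Finsupp.single i 1 := by
  ext k
  have hk := DFunLike.congr_fun h k
  simp only [Finsupp.tsub_apply, Finsupp.coe_zero, Pi.zero_apply,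
    Finsupp.single_apply] at hk ⊢
  by_cases hik : i = k
  · subst hik; simp at hk ⊢; omega
  · simp [hik] at hk ⊢; omega

lemma good_mem_Gsq (α β : ι →₀ ℕ) (hα : α ≠ 0) (hβ : β ≠ 0)
    (h : (monomial (Finsupp.sumElim α β) 1 : MvPolynomial (ι ⊕ ι) K) ∈ Vid K ι) :
    ((0, ⟨monomial (Finsupp.sumElim α β) 1, h⟩) : GA K ι) ∈ Gsq K ι := by
  obtain ⟨i, hi⟩ := Finsupp.ne_iff.1 hα
  obtain ⟨j, hj⟩ := Finsupp.ne_iff.1 hβ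
  simp only [Finsupp.coe_zero, Pi.zero_apply] at hi hj
  apply Submodule.subset_span
  by_cases hα' : α - Finsupp.single i 1 = 0
  · by_cases hβ' : β - Finsupp.single j 1 = 0
    · -- w = x_i * x_j
      refine ⟨(Finsupp.single i 1, 0), (Finsupp.single j 1, 0), ?_⟩
      refine Prod.ext rfl (Subtype.ext ?_)
      rw [mul_snd]
      show (monomial (Finsupp.sumElim α β) 1 : MvPolynomial (ι ⊕ ι) K)
        = (Yp K ι (Finsupp.single i 1) + ((0 : Vid K ι) : MvPolynomial (ι ⊕ ι) K)) *
          (Zp K ι (Finsupp.single j 1) + ((0 : Vid K ι) : MvPolynomial (ι ⊕ ι) K))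
      rw [ZeroMemClass.coe_zero, add_zero, add_zero, Yp_single, Zp_single, X, X,
        monomial_mul, one_mul, sumElim_singles,
        eq_single_of_sub_eq_zero ι α i hi hα', eq_single_of_sub_eq_zero ι β j hj hβ']
    · -- w = v_{α,β-ε_j} * x_j
      refine ⟨(0, ⟨monomial (Finsupp.sumElim α (β - Finsupp.single j 1)) 1,
        good_mem_Vid K ι _ _ hα hβ'⟩), (Finsupp.single j 1, 0), ?_⟩
      refine Prod.ext rfl (Subtype.ext ?_)
      rw [mul_snd]
      show (monomial (Finsupp.sumElim α β) 1 : MvPolynomial (ι ⊕ ι) K)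
        = (Yp K ι 0 + monomial (Finsupp.sumElim α (β - Finsupp.single j 1)) 1) *
          (Zp K ι (Finsupp.single j 1) + ((0 : Vid K ι) : MvPolynomial (ι ⊕ ι) K))
      rw [ZeroMemClass.coe_zero, add_zero, Yp_zero, zero_add, Zp_single, X,
        monomial_mul, mul_one, sumElim_add_single ι α β j hj]
  · -- w = x_i * v_{α-ε_i,β}
    refine ⟨(Finsupp.single i 1, 0), (0, ⟨monomial
      (Finsupp.sumElim (α - Finsupp.single i 1) β) 1, good_mem_Vid K ι _ _ hα' hβ⟩), ?_⟩
    refine Prod.ext rfl (Subtype.ext ?_)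
    rw [mul_snd]
    show (monomial (Finsupp.sumElim α β) 1 : MvPolynomial (ι ⊕ ι) K)
      = (Yp K ι (Finsupp.single i 1) + ((0 : Vid K ι) : MvPolynomial (ι ⊕ ι) K)) *
        (Zp K ι 0 + monomial (Finsupp.sumElim (α - Finsupp.single i 1) β) 1)
    rw [ZeroMemClass.coe_zero, add_zero, Zp_zero, zero_add, Yp_single, X,
      monomial_mul, one_mul, single_add_sumElim ι α β i hi]

lemma fst_eq_zero_of_mem_Gsq (w : GA K ι) (hw : w ∈ Gsq K ι) : w.1 = 0 := by
  have h : Gsq K ι ≤ LinearMap.ker (LinearMap.fst K (ι →₀ K) (Vid K ι)) := by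
    rw [Gsq, Submodule.span_le]
    rintro w ⟨u, v, rfl⟩
    exact LinearMap.mem_ker.2 rfl
  exact LinearMap.mem_ker.1 (h hw)

end Aux4
/-- The square `G_d²` (the span of all products in `G_d`) equals the span of the
basis elements `v_{α,β}` with `|α|, |β| > 0`, and `G_d²` is closed under
multiplication, on which the multiplication is commutative and associative. -/
theorem Gd_sq_span_and_comm_assoc (d : ℕ) :
    Gsq K (Fin d) =
      Submodule.span K {w : GA K (Fin d) |
        ∃ α β : Fin d →₀ ℕ, α ≠ 0 ∧ β ≠ 0 ∧ IsVElem K (Fin d) w α β} ∧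
    (∀ u ∈ Gsq K (Fin d), ∀ v ∈ Gsq K (Fin d), u * v ∈ Gsq K (Fin d)) ∧
    (∀ u ∈ Gsq K (Fin d), ∀ v ∈ Gsq K (Fin d), u * v = v * u) ∧
    (∀ u ∈ Gsq K (Fin d), ∀ v ∈ Gsq K (Fin d), ∀ w ∈ Gsq K (Fin d),
      (u * v) * w = u * (v * w)) := by
  have hset : {w : GA K (Fin d) |
      ∃ α β : Fin d →₀ ℕ, α ≠ 0 ∧ β ≠ 0 ∧ IsVElem K (Fin d) w α β} = SV K (Fin d) := rfl
  refine ⟨?_, ?_, ?_, ?_⟩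
  · rw [hset]
    apply le_antisymm
    · rw [Gsq, Submodule.span_le]
      rintro w ⟨u, v, rfl⟩
      exact inr_mem_spanSV K (Fin d) _ (mul_mem_Vid K (Fin d) u.1 v.1 _ _ u.2.2 v.2.2)
    · rw [Submodule.span_le]
      rintro w ⟨α, β, hα, hβ, h1, h2⟩
      have hw : w = (0, ⟨monomial (Finsupp.sumElim α β) 1, h2 ▸ w.2.2⟩) :=
        Prod.ext h1 (Subtype.ext h2)
      rw [hw]
      exact good_mem_Gsq K (Fin d) α β hα hβ _
  · intro u _ v _
    rw [Gsq]
    exact Submodule.subset_span ⟨u, v, rfl⟩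
  · intro u hu v hv
    refine Prod.ext rfl (Subtype.ext ?_)
    rw [mul_snd, mul_snd, fst_eq_zero_of_mem_Gsq K (Fin d) u hu,
      fst_eq_zero_of_mem_Gsq K (Fin d) v hv, Yp_zero, Zp_zero]
    ring
  · intro u hu v hv w hw
    refine Prod.ext rfl (Subtype.ext ?_)
    rw [mul_snd K (Fin d) (u * v) w, mul_fst K (Fin d) u v, mul_snd K (Fin d) u v,
      mul_snd K (Fin d) u (v * w), mul_fst K (Fin d) v w, mul_snd K (Fin d) v w,
      fst_eq_zero_of_mem_Gsq K (Fin d) u hu, fst_eq_zero_of_mem_Gsq K (Fin d) v hv,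
      fst_eq_zero_of_mem_Gsq K (Fin d) w hw, Yp_zero, Zp_zero]
    ring
end

section
/- The free bicommutative algebra on one generator is not left noetherian: in the algebra G_1 with basis {x} ∪ {y^a z^b : a,b ≥ 1} and multiplication x∘x = yz, x∘y^a z^b = y^{a+1} z^b, y^a z^b∘x = y^a z^{b+1}, y^a z^b ∘ y^c z^d = y^{a+c} z^{b+d}, the left ideal generated by the elements { y z^δ : δ = 1, 2, ... } is not finitely generated as a left ideal. -/
open MvPolynomial

variable (K : Type) [Field K] (ι : Type)

/-- Left ideals of `G`: subspaces `S` with `G ∘ S ⊆ S`. -/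
def IsLeftIdeal (S : Submodule K (GA K ι)) : Prop := ∀ (a : GA K ι), ∀ x ∈ S, a * x ∈ S

/-- The left ideal generated by a set: the smallest left ideal containing it. -/
noncomputable def leftIdealGen (T : Set (GA K ι)) : Submodule K (GA K ι) :=
  sInf {S : Submodule K (GA K ι) | IsLeftIdeal K ι S ∧ T ⊆ ↑S}


section Aux

open Finsupp

lemma Vid_one_eq (K : Type) [Field K] :
    Vid K (Fin 1) = Ideal.span {X (Sum.inl 0) * X (Sum.inr 0)} := by
  unfold Vid
  congr 1
  ext p
  constructor
  · rintro ⟨i, j, rfl⟩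
    rw [Subsingleton.elim i 0, Subsingleton.elim j 0]
    rfl
  · rintro rfl
    exact ⟨0, 0, rfl⟩

lemma coeffA (K : Type) [Field K] (q : MvPolynomial (Fin 1 ⊕ Fin 1) K)
    (hq : q ∈ Vid K (Fin 1)) (m : (Fin 1 ⊕ Fin 1) →₀ ℕ) (hm : m (Sum.inl 0) = 0) :
    coeff m q = 0 := by
  rw [Vid_one_eq, Ideal.mem_span_singleton] at hq
  obtain ⟨r, rfl⟩ := hq
  have h : X (Sum.inl 0) * X (Sum.inr 0) * r
      = X (Sum.inl (0 : Fin 1)) * (X (Sum.inr 0) * r) := by ring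
  rw [h, coeff_X_mul', if_neg]
  simp [Finsupp.mem_support_iff, hm]

lemma coeffB (K : Type) [Field K] (p q : MvPolynomial (Fin 1 ⊕ Fin 1) K)
    (hp : p ∈ Vid K (Fin 1)) (hq : q ∈ Vid K (Fin 1)) (m : (Fin 1 ⊕ Fin 1) →₀ ℕ)
    (hm : m (Sum.inl 0) ≤ 1) : coeff m (p * q) = 0 := by
  rw [Vid_one_eq, Ideal.mem_span_singleton] at hp hq
  obtain ⟨r, rfl⟩ := hp
  obtain ⟨s, rfl⟩ := hq
  have h : (X (Sum.inl 0) * X (Sum.inr 0) * r) * (X (Sum.inl 0) * X (Sum.inr 0) * s)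
      = X (Sum.inl (0 : Fin 1)) * (X (Sum.inl 0) *
        (X (Sum.inr 0) * X (Sum.inr 0) * r * s)) := by ring
  rw [h, coeff_X_mul']
  split_ifs with h1
  · rw [coeff_X_mul', if_neg]
    simp [Finsupp.tsub_apply, Finsupp.single_apply]
    omega
  · rfl

end Aux

/-- The one-generated free bicommutative algebra `G_1` is not left noetherian: the
left ideal of `G_1` generated by the elements `y z^δ`, `δ = 1, 2, …`, is not
finitely generated as a left ideal. -/
theorem G1_left_ideal_not_finitely_generated :
    ¬ ∃ T : Finset (GA K (Fin 1)),
        leftIdealGen K (Fin 1) ↑T =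
        leftIdealGen K (Fin 1)
          {w : GA K (Fin 1) | ∃ δ : ℕ, 1 ≤ δ ∧
            IsVElem K (Fin 1) w (Finsupp.single 0 1) (Finsupp.single 0 δ)} := by
  rintro ⟨T, hT⟩
  classical
  set N : ℕ := 1 + T.sup (fun t => (t.2 : MvPolynomial (Fin 1 ⊕ Fin 1) K).totalDegree) with hN
  set d₁ : (Fin 1 ⊕ Fin 1) →₀ ℕ :=
    Finsupp.sumElim (Finsupp.single 0 1) (Finsupp.single 0 N) with hd₁
  have hd₁l : d₁ (Sum.inl 0) = 1 := by simp [hd₁, Finsupp.coe_sumElim]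
  have hd₁r : d₁ (Sum.inr 0) = N := by simp [hd₁, Finsupp.coe_sumElim]
  have hsum : ∑ i ∈ d₁.support, d₁ i = 1 + N := by
    rw [Finset.sum_subset (Finset.subset_univ _)
      (fun x _ hx => Finsupp.notMem_support_iff.mp hx), Fintype.sum_sum_type]
    simp only [Finset.univ_unique, Finset.sum_singleton]
    rw [show (default : Fin 1) = 0 from rfl, hd₁l, hd₁r]
  have hNpos : 1 ≤ N := by omega
  have hd₁eq : d₁ = Finsupp.single (Sum.inl 0) 1 + Finsupp.single (Sum.inr 0) N := by
    ext x
    cases x with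
    | inl i =>
      fin_cases i
      simp [hd₁, Finsupp.coe_sumElim, Finsupp.single_apply]
    | inr j =>
      fin_cases j
      simp [hd₁, Finsupp.coe_sumElim, Finsupp.single_apply]
  have hmon : (monomial d₁ (1 : K)) ∈ Vid K (Fin 1) := by
    rw [Vid_one_eq]
    have e1 : X (Sum.inl (0 : Fin 1)) * X (Sum.inr (0 : Fin 1)) *
        (X (Sum.inr 0) : MvPolynomial (Fin 1 ⊕ Fin 1) K) ^ (N - 1)
        = monomial d₁ (1 : K) := by
      rw [X_pow_eq_monomial, X, X, monomial_mul, monomial_mul, hd₁eq]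
      congr 1
      · rw [add_assoc, ← Finsupp.single_add, show 1 + (N - 1) = N from by omega]
      · norm_num
    exact e1 ▸ Ideal.mul_mem_right _ _ (Ideal.subset_span rfl)
  set wN : GA K (Fin 1) := ((0 : Fin 1 →₀ K), ⟨monomial d₁ (1 : K), hmon⟩) with hwN
  -- wN is in the left ideal generated by the infinite family
  have hmemfull : wN ∈ leftIdealGen K (Fin 1)
      {w : GA K (Fin 1) | ∃ δ : ℕ, 1 ≤ δ ∧
        IsVElem K (Fin 1) w (Finsupp.single 0 1) (Finsupp.single 0 δ)} := by
    refine Submodule.mem_sInf.mpr fun S' hS' => hS'.2 ⟨N, hNpos, rfl, rfl⟩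
  -- the invariant subspace
  set S : Submodule K (GA K (Fin 1)) :=
    { carrier := {w | w.1 = 0 ∧ coeff d₁ (w.2 : MvPolynomial (Fin 1 ⊕ Fin 1) K) = 0}
      add_mem' := by
        rintro a b ⟨ha1, ha2⟩ ⟨hb1, hb2⟩
        refine ⟨?_, ?_⟩
        · show a.1 + b.1 = 0
          rw [ha1, hb1, add_zero]
        · show coeff d₁ ((a.2 : MvPolynomial (Fin 1 ⊕ Fin 1) K) + (b.2 : MvPolynomial (Fin 1 ⊕ Fin 1) K)) = 0
          rw [coeff_add, ha2, hb2, add_zero]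
      zero_mem' := ⟨rfl, by simp⟩
      smul_mem' := by
        rintro c a ⟨ha1, ha2⟩
        refine ⟨?_, ?_⟩
        · show c • a.1 = 0
          rw [ha1, smul_zero]
        · show coeff d₁ (c • (a.2 : MvPolynomial (Fin 1 ⊕ Fin 1) K)) = 0
          rw [coeff_smul, ha2, smul_zero] } with hS
  have hSleft : IsLeftIdeal K (Fin 1) S := by
    rintro u w ⟨hw1, -⟩
    refine ⟨rfl, ?_⟩
    show coeff d₁ ((Yp K (Fin 1) u.1 + (u.2 : MvPolynomial (Fin 1 ⊕ Fin 1) K)) *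
      (Zp K (Fin 1) w.1 + (w.2 : MvPolynomial (Fin 1 ⊕ Fin 1) K))) = 0
    have hZ : Zp K (Fin 1) w.1 = 0 := by
      rw [hw1, Zp, Finsupp.sum_zero_index]
    rw [hZ, zero_add, add_mul, coeff_add]
    have h1 : coeff d₁ (Yp K (Fin 1) u.1 * (w.2 : MvPolynomial (Fin 1 ⊕ Fin 1) K)) = 0 := by
      rw [Yp, Finsupp.sum, Finset.sum_mul, coeff_sum]
      refine Finset.sum_eq_zero fun i _ => ?_
      rw [mul_assoc, coeff_C_mul, Subsingleton.elim i 0, coeff_X_mul']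
      split_ifs with h1
      · rw [coeffA K _ w.2.2 _ (by rw [Finsupp.tsub_apply, hd₁l]; simp), mul_zero]
      · rw [mul_zero]
    have h2 : coeff d₁ ((u.2 : MvPolynomial (Fin 1 ⊕ Fin 1) K) * (w.2 : MvPolynomial (Fin 1 ⊕ Fin 1) K)) = 0 :=
      coeffB K _ _ u.2.2 w.2.2 d₁ (by rw [hd₁l])
    rw [h1, h2, add_zero]
  have hTS : (↑T : Set (GA K (Fin 1))) ⊆ ↑S := by
    intro t ht
    have htL : t ∈ leftIdealGen K (Fin 1) (↑T : Set (GA K (Fin 1))) :=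
      Submodule.mem_sInf.mpr fun S' hS' => hS'.2 ht
    rw [hT] at htL
    refine ⟨?_, ?_⟩
    · -- first component vanishes
      have h0 : t ∈ LinearMap.ker (LinearMap.fst K (Fin 1 →₀ K) (Vid K (Fin 1))) := by
        refine Submodule.mem_sInf.mp htL _ ⟨fun a x _ => ?_, fun w hw => ?_⟩
        · exact rfl
        · obtain ⟨δ, -, h1, -⟩ := hw
          exact h1
      exact h0
    · refine coeff_eq_zero_of_totalDegree_lt ?_
      rw [hsum]
      have h2 : ((t.2 : MvPolynomial (Fin 1 ⊕ Fin 1) K)).totalDegree ≤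
          T.sup (fun t => ((t.2 : MvPolynomial (Fin 1 ⊕ Fin 1) K)).totalDegree) :=
        Finset.le_sup (f := fun t : GA K (Fin 1) =>
          ((t.2 : MvPolynomial (Fin 1 ⊕ Fin 1) K)).totalDegree) ht
      omega
  have hle : leftIdealGen K (Fin 1) (↑T : Set (GA K (Fin 1))) ≤ S :=
    sInf_le ⟨hSleft, hTS⟩
  have hwNS : wN ∈ S := hle (hT ▸ hmemfull)
  have : (1 : K) = 0 := by
    have h2 := hwNS.2
    rwa [show ((wN.2 : MvPolynomial (Fin 1 ⊕ Fin 1) K)) = monomial d₁ (1 : K) from rfl,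
      coeff_monomial, if_pos rfl] at h2
  exact one_ne_zero this
end

section
/- In the algebra G_1 (one-generated free bicommutative algebra model), the right ideal generated by the elements { y^γ z : γ = 1, 2, ... } is not finitely generated as a right ideal. -/
open MvPolynomial

variable (K : Type) [Field K] (ι : Type)

/-- Right ideals of `G`: subspaces `S` with `S ∘ G ⊆ S`. -/
def IsRightIdeal (S : Submodule K (GA K ι)) : Prop := ∀ (a : GA K ι), ∀ x ∈ S, x * a ∈ S

/-- The right ideal generated by a set: the smallest right ideal containing it. -/
noncomputable def rightIdealGen (T : Set (GA K ι)) : Submodule K (GA K ι) :=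
  sInf {S : Submodule K (GA K ι) | IsRightIdeal K ι S ∧ T ⊆ ↑S}

noncomputable def e1 (γ : ℕ) : (Fin 1 ⊕ Fin 1) →₀ ℕ :=
  Finsupp.sumElim (Finsupp.single 0 γ) (Finsupp.single 0 1)

lemma e1_inl (γ : ℕ) : e1 γ (Sum.inl 0) = γ := by
  simp [e1]

lemma e1_inr (γ : ℕ) : e1 γ (Sum.inr 0) = 1 := by
  simp [e1]

lemma e1_injective : Function.Injective e1 := by
  intro a b h
  have := congrArg (fun f => f (Sum.inl 0)) h
  simpa [e1_inl] using this

lemma mem_span_z_of_mem_Vid (p : MvPolynomial (Fin 1 ⊕ Fin 1) K) (hp : p ∈ Vid K (Fin 1)) :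
    p ∈ Ideal.span {(X (Sum.inr 0) : MvPolynomial (Fin 1 ⊕ Fin 1) K)} := by
  refine Ideal.span_le.mpr ?_ hp
  rintro q ⟨i, j, rfl⟩
  have hj : j = 0 := Subsingleton.elim _ _
  subst hj
  exact Ideal.mul_mem_left _ _ (Ideal.subset_span rfl)

lemma Zp_mem_span_z (b : Fin 1 →₀ K) :
    Zp K (Fin 1) b ∈ Ideal.span {(X (Sum.inr 0) : MvPolynomial (Fin 1 ⊕ Fin 1) K)} := by
  refine Submodule.sum_mem _ fun j _ => ?_
  have hj : j = 0 := Subsingleton.elim _ _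
  subst hj
  exact Ideal.mul_mem_left _ _ (Ideal.subset_span rfl)

lemma coeff_e1_mul (p r : MvPolynomial (Fin 1 ⊕ Fin 1) K)
    (hp : p ∈ Ideal.span {(X (Sum.inr 0) : MvPolynomial (Fin 1 ⊕ Fin 1) K)})
    (hr : r ∈ Ideal.span {(X (Sum.inr 0) : MvPolynomial (Fin 1 ⊕ Fin 1) K)})
    (γ : ℕ) : coeff (e1 γ) (p * r) = 0 := by
  rw [Ideal.mem_span_singleton] at hp hr
  obtain ⟨p', rfl⟩ := hp
  obtain ⟨r', rfl⟩ := hr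
  have h : (X (Sum.inr 0) * p') * (X (Sum.inr 0) * r')
      = (X (Sum.inr 0) : MvPolynomial (Fin 1 ⊕ Fin 1) K) ^ 2 * (p' * r') := by ring
  rw [h, X_pow_eq_monomial, coeff_monomial_mul']
  rw [if_neg]
  intro hle
  have := (Finsupp.single_le_iff).mp hle
  rw [e1_inr] at this
  omega

lemma monomial_e1_mem_Vid (γ : ℕ) (hγ : 1 ≤ γ) :
    (monomial (e1 γ) 1 : MvPolynomial (Fin 1 ⊕ Fin 1) K) ∈ Vid K (Fin 1) := by
  have he : e1 γ = Finsupp.single (Sum.inl 0) (γ - 1)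
      + (Finsupp.single (Sum.inl 0) 1 + Finsupp.single (Sum.inr 0) 1) := by
    ext x
    cases x with
    | inl i =>
      have : i = 0 := Subsingleton.elim _ _
      subst this
      simp [e1]
      omega
    | inr j =>
      have : j = 0 := Subsingleton.elim _ _
      subst this
      simp [e1]
  have key : (monomial (e1 γ) 1 : MvPolynomial (Fin 1 ⊕ Fin 1) K)
      = X (Sum.inl 0) ^ (γ - 1) * (X (Sum.inl 0) * X (Sum.inr 0)) := by
    have h2 : (X (Sum.inl 0) : MvPolynomial (Fin 1 ⊕ Fin 1) K) ^ (γ-1)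
        * (X (Sum.inl 0) * X (Sum.inr 0))
        = X (Sum.inl 0)^(γ-1) * (X (Sum.inl 0)^1 * X (Sum.inr 0)^1) := by ring
    rw [h2, X_pow_eq_monomial, X_pow_eq_monomial, X_pow_eq_monomial, monomial_mul, monomial_mul,
      one_mul, one_mul]
    rw [he]
  rw [key]
  exact Ideal.mul_mem_left _ _ (Ideal.subset_span ⟨0, 0, rfl⟩)


section MainAux

variable (K : Type) [Field K]

lemma subset_rightIdealGen (T : Set (GA K (Fin 1))) : T ⊆ ↑(rightIdealGen K (Fin 1) T) := by
  intro t ht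
  exact Submodule.mem_sInf.mpr fun S hS => hS.2 ht

lemma rightIdealGen_le {T : Set (GA K (Fin 1))} {S : Submodule K (GA K (Fin 1))}
    (h1 : IsRightIdeal K (Fin 1) S) (h2 : T ⊆ ↑S) : rightIdealGen K (Fin 1) T ≤ S :=
  sInf_le ⟨h1, h2⟩

/-- coefficient extraction as a linear map on `GA`. -/
noncomputable def Lco (γ : ℕ) : GA K (Fin 1) →ₗ[K] K where
  toFun w := coeff (e1 γ) (w.2 : MvPolynomial (Fin 1 ⊕ Fin 1) K)
  map_add' u v := by simp
  map_smul' c w := by simp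

lemma Lco_apply (γ : ℕ) (w : GA K (Fin 1)) :
    Lco K γ w = coeff (e1 γ) (w.2 : MvPolynomial (Fin 1 ⊕ Fin 1) K) := rfl

end MainAux

/-- In the one-generated free bicommutative algebra `G_1`, the right ideal
generated by the elements `y^γ z`, `γ = 1, 2, …`, is not finitely generated as a
right ideal. -/
theorem G1_right_ideal_not_finitely_generated :
    ¬ ∃ T : Finset (GA K (Fin 1)),
        rightIdealGen K (Fin 1) ↑T =
        rightIdealGen K (Fin 1)
          {w : GA K (Fin 1) | ∃ γ : ℕ, 1 ≤ γ ∧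
            IsVElem K (Fin 1) w (Finsupp.single 0 γ) (Finsupp.single 0 1)} := by
  rintro ⟨T, hT⟩
  set Jset : Set (GA K (Fin 1)) :=
    {w : GA K (Fin 1) | ∃ γ : ℕ, 1 ≤ γ ∧
      IsVElem K (Fin 1) w (Finsupp.single 0 γ) (Finsupp.single 0 1)} with hJset
  -- the submodule of elements with zero linear part
  set P : Submodule K (GA K (Fin 1)) := LinearMap.ker (LinearMap.fst K (Fin 1 →₀ K) (Vid K (Fin 1)))
    with hP
  have hPmem : ∀ w : GA K (Fin 1), w ∈ P ↔ w.1 = 0 := fun w => Iff.rfl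
  have hPright : IsRightIdeal K (Fin 1) P := by
    intro a x _
    exact (hPmem _).mpr rfl
  have hJsetP : Jset ⊆ ↑P := by
    rintro w ⟨γ, _, h1, _⟩
    exact (hPmem _).mpr h1
  -- every generator in T has zero linear part
  have hT1 : ∀ t ∈ T, (t : GA K (Fin 1)).1 = 0 := by
    intro t ht
    have h1 : t ∈ rightIdealGen K (Fin 1) (↑T : Set (GA K (Fin 1))) :=
      subset_rightIdealGen K _ ht
    rw [hT] at h1
    exact (hPmem t).mp (rightIdealGen_le K hPright hJsetP h1)
  -- the submodule D of elements with zero linear part and vanishing `y^γ z`-coefficients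
  set D : Submodule K (GA K (Fin 1)) := P ⊓ (⨅ γ : ℕ, LinearMap.ker (Lco K γ)) with hD
  have hDmem : ∀ w : GA K (Fin 1), w ∈ D ↔ (w.1 = 0 ∧ ∀ γ : ℕ,
      coeff (e1 γ) (w.2 : MvPolynomial (Fin 1 ⊕ Fin 1) K) = 0) := by
    intro w
    rw [hD, Submodule.mem_inf, Submodule.mem_iInf]
    simp only [LinearMap.mem_ker, Lco_apply, hPmem]
  set S : Submodule K (GA K (Fin 1)) := Submodule.span K ↑T ⊔ D with hS
  have hSP : S ≤ P := by
    refine sup_le (Submodule.span_le.mpr ?_) ?_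
    · intro t ht
      exact (hPmem t).mpr (hT1 t ht)
    · intro w hw
      exact (hPmem w).mpr ((hDmem w).mp hw).1
  -- S is a right ideal
  have hSright : IsRightIdeal K (Fin 1) S := by
    intro a x hx
    refine Submodule.mem_sup_right ((hDmem (x * a)).mpr ⟨rfl, fun γ => ?_⟩)
    have hx1 : x.1 = 0 := (hPmem x).mp (hSP hx)
    have hsnd : ((x * a).2 : MvPolynomial (Fin 1 ⊕ Fin 1) K)
        = (Yp K (Fin 1) x.1 + (x.2 : MvPolynomial (Fin 1 ⊕ Fin 1) K)) *
          (Zp K (Fin 1) a.1 + (a.2 : MvPolynomial (Fin 1 ⊕ Fin 1) K)) := rfl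
    have hYp0 : Yp K (Fin 1) (0 : Fin 1 →₀ K) = 0 := Finsupp.sum_zero_index
    rw [hsnd, hx1, hYp0, zero_add]
    exact coeff_e1_mul K _ _ (mem_span_z_of_mem_Vid K _ x.2.2)
      (Submodule.add_mem _ (Zp_mem_span_z K a.1) (mem_span_z_of_mem_Vid K _ a.2.2)) γ
  have hTS : (↑T : Set (GA K (Fin 1))) ⊆ ↑S :=
    fun t ht => Submodule.mem_sup_left (Submodule.subset_span ht)
  have hJS : rightIdealGen K (Fin 1) Jset ≤ S := by
    rw [← hT]; exact rightIdealGen_le K hSright hTS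
  -- the family v m = y^(m+1) z
  set v : ℕ → GA K (Fin 1) := fun m =>
    (0, ⟨monomial (e1 (m + 1)) 1, monomial_e1_mem_Vid K (m + 1) (by omega)⟩) with hv
  have hvJ : ∀ m, v m ∈ Jset := by
    intro m
    exact ⟨m + 1, by omega, rfl, rfl⟩
  have hvS : ∀ m, v m ∈ S := fun m =>
    hJS (subset_rightIdealGen K Jset (hvJ m))
  -- the linear map extracting all `y^(m+1) z` coefficients
  set Φ : GA K (Fin 1) →ₗ[K] (ℕ → K) := LinearMap.pi (fun m => Lco K (m + 1)) with hΦ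
  have hDker : ∀ w ∈ D, Φ w = 0 := by
    intro w hw
    funext m
    simp only [hΦ, LinearMap.pi_apply, Lco_apply, Pi.zero_apply]
    exact ((hDmem w).mp hw).2 (m + 1)
  set p : Submodule K (ℕ → K) := Submodule.map Φ (Submodule.span K ↑T) with hp
  have hΦv : ∀ m, Φ (v m) ∈ p := by
    intro m
    obtain ⟨t, ht, d, hd, hsum⟩ := Submodule.mem_sup.mp (hvS m)
    have : Φ (v m) = Φ t := by
      rw [← hsum, map_add, hDker d hd, add_zero]
    exact this ▸ ⟨t, ht, rfl⟩
  have hΦveq : ∀ m, Φ (v m) = ⇑(Finsupp.single m (1 : K)) := by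
    intro m
    funext γ'
    simp only [hΦ, hv, LinearMap.pi_apply, Lco_apply]
    rw [coeff_monomial, Finsupp.single_apply]
    by_cases h : m = γ'
    · subst h; simp
    · rw [if_neg (fun he => h (by have := e1_injective he; omega)), if_neg h]
  -- linear independence and finite dimensionality give a contradiction
  have li0 : LinearIndependent K fun m : ℕ => (Finsupp.single m (1 : K)) := by
    have h := (Finsupp.basisSingleOne (R := K) (ι := ℕ)).linearIndependent
    rwa [Finsupp.coe_basisSingleOne] at h
  have hinj : LinearMap.ker (Finsupp.lcoeFun : (ℕ →₀ K) →ₗ[K] (ℕ → K)) = ⊥ := by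
    rw [LinearMap.ker_eq_bot]
    intro f g hfg
    exact DFunLike.coe_injective hfg
  have li1 : LinearIndependent K fun m : ℕ => ⇑(Finsupp.single m (1 : K)) :=
    li0.map' Finsupp.lcoeFun hinj
  have li2 : LinearIndependent K (fun m : ℕ => (⟨Φ (v m), hΦv m⟩ : p)) := by
    apply LinearIndependent.of_comp p.subtype
    have hcomp : (⇑p.subtype ∘ fun m : ℕ => (⟨Φ (v m), hΦv m⟩ : p))
        = fun m : ℕ => ⇑(Finsupp.single m (1 : K)) := funext fun m => hΦveq m
    rw [hcomp]
    exact li1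
  have hfd : FiniteDimensional K p := by
    rw [hp, Submodule.map_span]
    exact FiniteDimensional.span_of_finite K ((T.finite_toSet).image _)
  exact Module.Finite.not_linearIndependent_of_infinite _ li2
end

section
/- Every finitely generated bicommutative algebra satisfies the ascending chain condition on two-sided ideals. -/
open Submodule

section BicommAux

variable {K : Type*} [Field K] {A : Type*} [NonUnitalNonAssocRing A] [Module K A]
  [IsScalarTower K A A] [SMulCommClass K A A]

variable (K A) in
/-- The span of all products in `A`. -/
def bcM : Submodule K A := Submodule.span K {x : A | ∃ a b : A, a * b = x}

lemma bcM_prod (a b : A) : a * b ∈ bcM K A := Submodule.subset_span ⟨a, b, rfl⟩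

lemma bc_mix (hlc : ∀ x₁ x₂ x₃ : A, x₁ * (x₂ * x₃) = x₂ * (x₁ * x₃))
    (hrc : ∀ x₁ x₂ x₃ : A, (x₁ * x₂) * x₃ = (x₁ * x₃) * x₂) (x a b y : A) :
    x * ((a * b) * y) = (x * (a * b)) * y := by
  calc x * ((a * b) * y) = x * ((a * y) * b) := by rw [hrc a b y]
    _ = (a * y) * (x * b) := hlc x (a * y) b
    _ = (a * (x * b)) * y := (hrc a (x * b) y).symm
    _ = (x * (a * b)) * y := by rw [hlc x a b]

lemma bc_mixM (hlc : ∀ x₁ x₂ x₃ : A, x₁ * (x₂ * x₃) = x₂ * (x₁ * x₃))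
    (hrc : ∀ x₁ x₂ x₃ : A, (x₁ * x₂) * x₃ = (x₁ * x₃) * x₂)
    {x : A} (hx : x ∈ bcM K A) (a b : A) : a * (x * b) = (a * x) * b := by
  induction hx using Submodule.span_induction with
  | mem x h => obtain ⟨c, d, rfl⟩ := h; exact bc_mix hlc hrc a c d b
  | zero => simp
  | add x y hx hy ihx ihy => simp [add_mul, mul_add, ihx, ihy]
  | smul c x hx ih => simp only [smul_mul_assoc, mul_smul_comm, ih]

variable (K) in
def bcOp (S : Finset A) : (↥S ⊕ ↥S) → Module.End K A :=
  Sum.elim (fun s => LinearMap.mulLeft K (s : A)) (fun s => LinearMap.mulRight K (s : A))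

lemma bcOp_mem (S : Finset A) (k : ↥S ⊕ ↥S) (x : A) : bcOp K S k x ∈ bcM K A := by
  cases k with
  | inl s => exact bcM_prod _ _
  | inr s => exact bcM_prod _ _

variable (K) in
noncomputable def bcOpM (S : Finset A) (k : ↥S ⊕ ↥S) : Module.End K ↥(bcM K A) :=
  (bcOp K S k).restrict (fun x _ => bcOp_mem S k x)

lemma bcOpM_coe (S : Finset A) (k : ↥S ⊕ ↥S) (m : ↥(bcM K A)) :
    (bcOpM K S k m : A) = bcOp K S k ↑m := rfl

lemma bcOpM_comm (hlc : ∀ x₁ x₂ x₃ : A, x₁ * (x₂ * x₃) = x₂ * (x₁ * x₃))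
    (hrc : ∀ x₁ x₂ x₃ : A, (x₁ * x₂) * x₃ = (x₁ * x₃) * x₂)
    (S : Finset A) (k l : ↥S ⊕ ↥S) : bcOpM K S k * bcOpM K S l = bcOpM K S l * bcOpM K S k := by
  apply LinearMap.ext; intro m
  apply Subtype.ext
  show bcOp K S k (bcOp K S l ↑m) = bcOp K S l (bcOp K S k ↑m)
  cases k with
  | inl s =>
    cases l with
    | inl t => exact hlc s t m
    | inr t => exact bc_mixM hlc hrc m.2 (s : A) (t : A)
  | inr s =>
    cases l with
    | inl t => exact (bc_mixM hlc hrc m.2 (t : A) (s : A)).symm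
    | inr t => exact hrc m t s

variable (K) in
abbrev bcP (S : Finset A) : Submonoid (Module.End K ↥(bcM K A)) :=
  Submonoid.closure (Set.range (bcOpM K S))

variable (K) in
noncomputable def bcPComm (S : Finset A)
    (hcomm : ∀ k l, bcOpM K S k * bcOpM K S l = bcOpM K S l * bcOpM K S k) :
    CommMonoid ↥(Submonoid.closure (Set.range (bcOpM K S))) :=
  Submonoid.closureCommMonoidOfComm _ (s := Set.range (bcOpM K S))
    (by rintro a ⟨k, rfl⟩ b ⟨l, rfl⟩; exact hcomm k l)

variable (K) in
noncomputable def bcPsi (S : Finset A)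
    (hcomm : ∀ k l, bcOpM K S k * bcOpM K S l = bcOpM K S l * bcOpM K S k) :
    Multiplicative ((↥S ⊕ ↥S) →₀ ℕ) →* Module.End K ↥(bcM K A) :=
  letI := bcPComm K S hcomm
  (bcP K S).subtype.comp
    { toFun := fun m => (Multiplicative.toAdd m).prod fun k n =>
        (⟨bcOpM K S k, Submonoid.subset_closure ⟨k, rfl⟩⟩ : ↥(bcP K S)) ^ n
      map_one' := by
        show ((Multiplicative.toAdd (1 : Multiplicative ((↥S ⊕ ↥S) →₀ ℕ))).prod fun k n =>
          (⟨bcOpM K S k, Submonoid.subset_closure ⟨k, rfl⟩⟩ : ↥(bcP K S)) ^ n) = 1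
        rw [toAdd_one, Finsupp.prod_zero_index]; rfl
      map_mul' := fun x y => by
        show ((Multiplicative.toAdd x + Multiplicative.toAdd y).prod _) = _
        exact Finsupp.prod_add_index' (fun k => pow_zero _) (fun k m n => pow_add _ _ _) }

lemma bcPsi_single (S : Finset A)
    (hcomm : ∀ k l, bcOpM K S k * bcOpM K S l = bcOpM K S l * bcOpM K S k) (k : ↥S ⊕ ↥S) :
    bcPsi K S hcomm (Multiplicative.ofAdd (Finsupp.single k 1)) = bcOpM K S k := by
  letI := bcPComm K S hcomm
  show ((Multiplicative.toAdd (Multiplicative.ofAdd (Finsupp.single k 1))).prod fun k n =>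
      (⟨bcOpM K S k, Submonoid.subset_closure ⟨k, rfl⟩⟩ : ↥(bcP K S)) ^ n : ↥(bcP K S)).1 = _
  rw [toAdd_ofAdd]
  rw [Finsupp.prod_single_index (h := fun l n =>
    ((⟨bcOpM K S l, Submonoid.subset_closure ⟨l, rfl⟩⟩ : ↥(bcP K S)) ^ n)) (pow_zero _), pow_one]

variable (K) in
noncomputable def bcPhi (S : Finset A)
    (hcomm : ∀ k l, bcOpM K S k * bcOpM K S l = bcOpM K S l * bcOpM K S k) :
    MvPolynomial (↥S ⊕ ↥S) K →ₐ[K] Module.End K ↥(bcM K A) :=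
  AddMonoidAlgebra.lift K (Module.End K ↥(bcM K A)) ((↥S ⊕ ↥S) →₀ ℕ) (bcPsi K S hcomm)

lemma bcPhi_X (S : Finset A)
    (hcomm : ∀ k l, bcOpM K S k * bcOpM K S l = bcOpM K S l * bcOpM K S k) (k : ↥S ⊕ ↥S) :
    bcPhi K S hcomm (MvPolynomial.X k) = bcOpM K S k := by
  have h1 : (MvPolynomial.X k : MvPolynomial (↥S ⊕ ↥S) K) =
      AddMonoidAlgebra.single (Finsupp.single k 1) 1 := rfl
  rw [h1]
  show AddMonoidAlgebra.lift K (Module.End K ↥(bcM K A)) ((↥S ⊕ ↥S) →₀ ℕ) (bcPsi K S hcomm) _ = _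
  rw [AddMonoidAlgebra.lift_single, one_smul, bcPsi_single]

end BicommAux

/-- Every finitely generated bicommutative algebra over a field is weakly
noetherian: it satisfies the ascending chain condition on two-sided ideals. -/
theorem finitely_generated_bicommutative_acc_two_sided_ideals
    {K : Type*} [Field K] {A : Type*} [NonUnitalNonAssocRing A] [Module K A]
    [IsScalarTower K A A] [SMulCommClass K A A]
    (hlc : ∀ x₁ x₂ x₃ : A, x₁ * (x₂ * x₃) = x₂ * (x₁ * x₃))
    (hrc : ∀ x₁ x₂ x₃ : A, (x₁ * x₂) * x₃ = (x₁ * x₃) * x₂)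
    (hfg : ∃ S : Finset A, NonUnitalAlgebra.adjoin K (↑S : Set A) = ⊤) :
    ∀ I : ℕ → Submodule K A,
      (∀ n, ∀ (a : A), ∀ x ∈ I n, a * x ∈ I n ∧ x * a ∈ I n) → Monotone I →
      ∃ N, ∀ n, N ≤ n → I n = I N := by
  obtain ⟨S, hS⟩ := hfg
  intro I hI hmono
  have hcomm := bcOpM_comm hlc hrc (K := K) S
  set R := MvPolynomial (↥S ⊕ ↥S) K with hR
  set Φ := bcPhi K S hcomm with hΦ
  letI : Module R ↥(bcM K A) := Module.compHom _ Φ.toRingHom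
  have hsmul : ∀ (r : R) (m : ↥(bcM K A)), r • m = Φ r m := fun _ _ => rfl
  have hsmulC : ∀ (c : K) (m : ↥(bcM K A)), (MvPolynomial.C c : R) • m = c • m := by
    intro c m
    rw [hsmul, ← MvPolynomial.algebraMap_eq, AlgHom.commutes, Module.algebraMap_end_apply]
  have hsmulX : ∀ (k : ↥S ⊕ ↥S) (m : ↥(bcM K A)),
      (MvPolynomial.X k : R) • m = bcOpM K S k m := by
    intro k m; rw [hsmul, bcPhi_X]
  have hop_left : ∀ (s : ↥S) (x : A), bcOp K S (Sum.inl s) x = (s : A) * x := fun _ _ => rfl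
  have hop_right : ∀ (s : ↥S) (x : A), bcOp K S (Sum.inr s) x = x * (s : A) := fun _ _ => rfl
  -- two-sided ideals are stable under the polynomial action
  have hIdeal : ∀ (n : ℕ) (r : R) (m : ↥(bcM K A)),
      (m : A) ∈ I n → ((r • m : ↥(bcM K A)) : A) ∈ I n := by
    intro n r
    induction r using MvPolynomial.induction_on with
    | C c =>
      intro m hm
      rw [hsmulC]
      exact (I n).smul_mem c hm
    | add p q hp hq =>
      intro m hm
      rw [add_smul]
      exact (I n).add_mem (hp m hm) (hq m hm)
    | mul_X p k hp =>
      intro m hm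
      rw [mul_smul]
      apply hp
      rw [hsmulX, bcOpM_coe]
      cases k with
      | inl s => rw [hop_left]; exact (hI n s (↑m) hm).1
      | inr s => rw [hop_right]; exact (hI n s (↑m) hm).2
  -- the finitely many generating products
  set gens : Set ↥(bcM K A) :=
    Set.range (fun p : ↥S × ↥S => (⟨(p.1 : A) * (p.2 : A), bcM_prod _ _⟩ : ↥(bcM K A)))
    with hgens_def
  set NN : Submodule R ↥(bcM K A) := Submodule.span R gens with hNN
  set NA : Submodule K A :=
    { carrier := {a : A | ∃ m : ↥(bcM K A), m ∈ NN ∧ (m : A) = a}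
      add_mem' := by
        rintro x y ⟨m, hm, rfl⟩ ⟨m', hm', rfl⟩
        exact ⟨m + m', NN.add_mem hm hm', rfl⟩
      zero_mem' := ⟨0, NN.zero_mem, rfl⟩
      smul_mem' := by
        rintro c x ⟨m, hm, rfl⟩
        exact ⟨c • m, by rw [← hsmulC]; exact NN.smul_mem _ hm, rfl⟩ } with hNA
  have hNA_op : ∀ (k : ↥S ⊕ ↥S) (a : A), a ∈ NA → bcOp K S k a ∈ NA := by
    rintro k a ⟨m, hm, rfl⟩
    exact ⟨bcOpM K S k m, by rw [← hsmulX]; exact NN.smul_mem _ hm, rfl⟩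
  have hNA_L : ∀ (s : ↥S) (a : A), a ∈ NA → (s : A) * a ∈ NA := by
    intro s a ha
    have := hNA_op (Sum.inl s) a ha
    rwa [hop_left] at this
  have hNA_R : ∀ (s : ↥S) (a : A), a ∈ NA → a * (s : A) ∈ NA := by
    intro s a ha
    have := hNA_op (Sum.inr s) a ha
    rwa [hop_right] at this
  have hgens_mem : ∀ s t : ↥S, (s : A) * (t : A) ∈ NA :=
    fun s t => ⟨_, Submodule.subset_span ⟨(s, t), rfl⟩, rfl⟩
  -- products of elements of NA with elements of NN stay in NA
  have hmulNN : ∀ a ∈ NA, ∀ (m : ↥(bcM K A)), m ∈ NN →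
      a * (m : A) ∈ NA ∧ (m : A) * a ∈ NA := by
    intro a ha m hm
    have claim : ∀ (r : R) (m : ↥(bcM K A)), (a * (m : A) ∈ NA ∧ (m : A) * a ∈ NA) →
        a * ((Φ r m : ↥(bcM K A)) : A) ∈ NA ∧ ((Φ r m : ↥(bcM K A)) : A) * a ∈ NA := by
      intro r
      induction r using MvPolynomial.induction_on with
      | C c =>
        intro m hm
        have hc : Φ (MvPolynomial.C c) m = c • m := by rw [← hsmul, hsmulC]
        rw [hc]
        constructor
        · rw [Submodule.coe_smul, mul_smul_comm]
          exact NA.smul_mem c hm.1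
        · rw [Submodule.coe_smul, smul_mul_assoc]
          exact NA.smul_mem c hm.2
      | add p q hp hq =>
        intro m hm
        have : Φ (p + q) m = Φ p m + Φ q m := by rw [map_add]; rfl
        rw [this]
        constructor
        · rw [Submodule.coe_add, mul_add]
          exact NA.add_mem (hp m hm).1 (hq m hm).1
        · rw [Submodule.coe_add, add_mul]
          exact NA.add_mem (hp m hm).2 (hq m hm).2
      | mul_X p k hp =>
        intro m hm
        have : Φ (p * MvPolynomial.X k) m = Φ p (bcOpM K S k m) := by
          rw [map_mul, Module.End.mul_apply, bcPhi_X]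
        rw [this]
        apply hp
        rw [bcOpM_coe]
        cases k with
        | inl s =>
          rw [hop_left]
          constructor
          · rw [hlc a s (↑m)]
            exact hNA_L s _ hm.1
          · rw [← bc_mixM hlc hrc m.2 (s : A) a]
            exact hNA_L s _ hm.2
        | inr t =>
          rw [hop_right]
          constructor
          · rw [bc_mixM hlc hrc m.2 a (t : A)]
            exact hNA_R t _ hm.1
          · rw [hrc (↑m) (t : A) a]
            exact hNA_R t _ hm.2
    induction hm using Submodule.span_induction with
    | mem m h =>
      obtain ⟨⟨s, t⟩, rfl⟩ := h
      constructor
      · show a * ((s : A) * (t : A)) ∈ NA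
        rw [hlc a s t]
        exact hNA_L s _ (hNA_R t a ha)
      · show ((s : A) * (t : A)) * a ∈ NA
        rw [hrc (s : A) (t : A) a]
        exact hNA_R t _ (hNA_L s a ha)
    | zero => constructor <;> simp
    | add x y hx hy ihx ihy =>
      constructor
      · rw [Submodule.coe_add, mul_add]
        exact NA.add_mem ihx.1 ihy.1
      · rw [Submodule.coe_add, add_mul]
        exact NA.add_mem ihx.2 ihy.2
    | smul r m hm ih =>
      have : ((r • m : ↥(bcM K A)) : A) = ((Φ r m : ↥(bcM K A)) : A) := by rw [hsmul]
      rw [this]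
      exact claim r m ih
  have hNA_mul : ∀ a b : A, (a ∈ (S : Set A) ∨ a ∈ NA) → (b ∈ (S : Set A) ∨ b ∈ NA) →
      a * b ∈ NA := by
    intro a b ha hb
    rcases hb with hb | hb
    · rcases ha with ha | ha
      · exact hgens_mem ⟨a, ha⟩ ⟨b, hb⟩
      · exact hNA_R ⟨b, hb⟩ a ha
    · rcases ha with ha | ha
      · exact hNA_L ⟨a, ha⟩ b hb
      · obtain ⟨m, hm, rfl⟩ := hb
        exact (hmulNN a ha m hm).1
  have hclos : ∀ w ∈ Subsemigroup.closure (S : Set A), w ∈ (S : Set A) ∨ w ∈ NA := by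
    intro w hw
    induction hw using Subsemigroup.closure_induction with
    | mem x h => exact Or.inl h
    | mul x y hx hy ihx ihy => exact Or.inr (hNA_mul x y ihx ihy)
  have htop : ∀ a : A, a ∈ Submodule.span K ((Subsemigroup.closure (S : Set A) : Set A)) := by
    intro a
    have h2 : a ∈ (NonUnitalAlgebra.adjoin K (S : Set A)).toSubmodule := by
      rw [hS]; trivial
    rwa [NonUnitalAlgebra.adjoin_eq_span] at h2
  have hmulNA : ∀ a b : A, a * b ∈ NA := by
    have key : ∀ b ∈ Submodule.span K ((Subsemigroup.closure (S : Set A) : Set A)),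
        ∀ a ∈ Submodule.span K ((Subsemigroup.closure (S : Set A) : Set A)), a * b ∈ NA := by
      intro b hb
      induction hb using Submodule.span_induction with
      | mem w hw =>
        intro a ha
        induction ha using Submodule.span_induction with
        | mem v hv => exact hNA_mul v w (hclos v hv) (hclos w hw)
        | zero => rw [zero_mul]; exact NA.zero_mem
        | add x y hx hy ihx ihy => rw [add_mul]; exact NA.add_mem ihx ihy
        | smul c x hx ih => rw [smul_mul_assoc]; exact NA.smul_mem c ih
      | zero => intro a ha; rw [mul_zero]; exact NA.zero_mem
      | add x y hx hy ihx ihy =>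
        intro a ha; rw [mul_add]; exact NA.add_mem (ihx a ha) (ihy a ha)
      | smul c x hx ih => intro a ha; rw [mul_smul_comm]; exact NA.smul_mem c (ih a ha)
    exact fun a b => key b (htop b) a (htop a)
  have hNNtop : NN = ⊤ := by
    rw [eq_top_iff]
    rintro m -
    have hmNA : (m : A) ∈ NA := by
      have hle : bcM K A ≤ NA := by
        rw [bcM]
        exact Submodule.span_le.mpr (by rintro x ⟨a, b, rfl⟩; exact hmulNA a b)
      exact hle m.2
    obtain ⟨m', hm', h⟩ := hmNA
    have : m' = m := Subtype.ext h
    exact this ▸ hm'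
  letI : Module.Finite R ↥(bcM K A) :=
    ⟨Submodule.fg_def.mpr ⟨gens, Set.finite_range _, hNNtop⟩⟩
  letI : IsNoetherian R ↥(bcM K A) := isNoetherian_of_isNoetherianRing_of_finite R ↥(bcM K A)
  set J : ℕ → Submodule R ↥(bcM K A) := fun n =>
    { carrier := {m : ↥(bcM K A) | (m : A) ∈ I n}
      add_mem' := by
        intro x y hx hy
        exact (I n).add_mem hx hy
      zero_mem' := (I n).zero_mem
      smul_mem' := fun r {m} hm => hIdeal n r m hm } with hJ
  have hJmono : Monotone J := fun i j hij m hm => hmono hij hm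
  obtain ⟨N1, hN1⟩ := monotone_stabilizes_iff_noetherian.mpr inferInstance ⟨J, hJmono⟩
  -- the quotient by the span of products is finite dimensional
  set π := (bcM K A).mkQ with hπ
  have hclosM : ∀ w ∈ Subsemigroup.closure (S : Set A), w ∈ (S : Set A) ∨ w ∈ bcM K A := by
    intro w hw
    induction hw using Subsemigroup.closure_induction with
    | mem x h => exact Or.inl h
    | mul x y hx hy ihx ihy => exact Or.inr (bcM_prod x y)
  have hQspan : ∀ q : A ⧸ bcM K A, q ∈ Submodule.span K (π '' (S : Set A)) := by
    intro q
    obtain ⟨a, rfl⟩ := (bcM K A).mkQ_surjective q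
    have ha := htop a
    induction ha using Submodule.span_induction with
    | mem w hw =>
      rcases hclosM w hw with h | h
      · exact Submodule.subset_span ⟨w, h, rfl⟩
      · have : π w = 0 := by
          rw [hπ, Submodule.mkQ_apply, Submodule.Quotient.mk_eq_zero]
          exact h
        rw [this]
        exact Submodule.zero_mem _
    | zero => rw [map_zero]; exact Submodule.zero_mem _
    | add x y hx hy ihx ihy => rw [map_add]; exact Submodule.add_mem _ ihx ihy
    | smul c x hx ih => rw [map_smul]; exact Submodule.smul_mem _ c ih
  letI : Module.Finite K (A ⧸ bcM K A) :=
    ⟨Submodule.fg_def.mpr ⟨π '' (S : Set A), (S.finite_toSet).image π,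
      Submodule.eq_top_iff'.mpr hQspan⟩⟩
  letI : IsNoetherian K (A ⧸ bcM K A) :=
    isNoetherian_of_isNoetherianRing_of_finite K (A ⧸ bcM K A)
  set J2 : ℕ → Submodule K (A ⧸ bcM K A) := fun n => (I n).map π with hJ2
  have hJ2mono : Monotone J2 := fun i j hij => Submodule.map_mono (hmono hij)
  obtain ⟨N2, hN2⟩ := monotone_stabilizes_iff_noetherian.mpr inferInstance ⟨J2, hJ2mono⟩
  refine ⟨max N1 N2, fun n hn => ?_⟩
  refine le_antisymm ?_ (hmono hn)
  intro x hx
  have e2 : J2 n = J2 (max N1 N2) := by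
    have h1 : J2 N2 = J2 n := hN2 n (le_trans (le_max_right _ _) hn)
    have h2 : J2 N2 = J2 (max N1 N2) := hN2 _ (le_max_right _ _)
    rw [← h1, ← h2]
  have e1 : J n = J (max N1 N2) := by
    have h1 : J N1 = J n := hN1 n (le_trans (le_max_left _ _) hn)
    have h2 : J N1 = J (max N1 N2) := hN1 _ (le_max_left _ _)
    rw [← h1, ← h2]
  have hq : π x ∈ J2 (max N1 N2) := e2 ▸ Submodule.mem_map_of_mem hx
  obtain ⟨y, hy, hxy⟩ := hq
  have hxyM : x - y ∈ bcM K A := by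
    have : Submodule.Quotient.mk y = (Submodule.Quotient.mk x : A ⧸ bcM K A) := hxy
    have h2 := (Submodule.Quotient.eq (bcM K A)).mp this
    have h3 := (bcM K A).neg_mem h2
    rwa [neg_sub] at h3
  have hsub : x - y ∈ I n := (I n).sub_mem hx (hmono hn hy)
  have hmem : (⟨x - y, hxyM⟩ : ↥(bcM K A)) ∈ J n := hsub
  rw [e1] at hmem
  have hxmy : x - y ∈ I (max N1 N2) := hmem
  have := (I (max N1 N2)).add_mem hxmy hy
  rwa [sub_add_cancel] at this
end

section
/- The quasi-order ≼ on [Y,Z] from the previous statement is isomorphic (as a quasi-ordered set) to the Higman sequence order on finite sequences over ℕ×ℕ: identifying y_1^{α_1}···y_m^{α_m} z_1^{β_1}···z_m^{β_m} with the sequence ((α_1,β_1),...,(α_m,β_m)), one has Y^α Z^β ≼ Y^γ Z^δ iff the corresponding sequence of pairs embeds into the other via a strictly increasing index map with componentwise domination. -/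
/-- A monomial `Y^α Z^β` in the commuting variables `y_1, y_2, …, z_1, z_2, …` is
encoded by its pair of (finitely supported) exponent vectors `(α, β)`. -/
abbrev YZMonomial : Type := (ℕ →₀ ℕ) × (ℕ →₀ ℕ)

/-- `Y^α Z^β ≼ Y^γ Z^δ` iff for some strictly increasing `φ : ℕ → ℕ` the renamed
monomial `∏ y_{φ(i)}^{α_i} z_{φ(i)}^{β_i}` divides `Y^γ Z^δ`. -/
def MonomialPrec (u v : YZMonomial) : Prop :=
  ∃ φ : ℕ → ℕ, StrictMono φ ∧ ∀ i, u.1 i ≤ v.1 (φ i) ∧ u.2 i ≤ v.2 (φ i)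

/-- The length of the finite sequence of pairs
`((α_1,β_1), …, (α_m,β_m))` associated with the monomial `Y^α Z^β`, padding the
two exponent vectors with zeros so that they have the same length `m`. -/
def monLen (u : YZMonomial) : ℕ := (u.1.support ∪ u.2.support).sup id + 1

lemma monLen_zero_of_le (u : YZMonomial) (i : ℕ) (hi : monLen u ≤ i) :
    u.1 i = 0 ∧ u.2 i = 0 := by
  constructor <;> by_contra hc
  · have hmem : i ∈ u.1.support ∪ u.2.support :=
      Finset.mem_union_left _ (Finsupp.mem_support_iff.mpr hc)
    have := Finset.le_sup (f := id) hmem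
    simp only [id] at this
    unfold monLen at hi; omega
  · have hmem : i ∈ u.1.support ∪ u.2.support :=
      Finset.mem_union_right _ (Finsupp.mem_support_iff.mpr hc)
    have := Finset.le_sup (f := id) hmem
    simp only [id] at this
    unfold monLen at hi; omega

/-- The quasi-order `≼` on monomials is isomorphic to the Higman sequence order on
finite sequences over `ℕ × ℕ`: identifying `Y^α Z^β` (with its exponent vectors
padded to a common length `m`) with the sequence `((α_1,β_1), …, (α_m,β_m))`, one
has `Y^α Z^β ≼ Y^γ Z^δ` iff the corresponding sequence of pairs embeds into the
other one via a strictly increasing index map with componentwise domination. -/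
theorem monomialPrec_iff_higman_embedding (u v : YZMonomial) :
    MonomialPrec u v ↔
      ∃ φ : Fin (monLen u) → Fin (monLen v), StrictMono φ ∧
        ∀ i : Fin (monLen u),
          u.1 (i : ℕ) ≤ v.1 ((φ i : ℕ)) ∧ u.2 (i : ℕ) ≤ v.2 ((φ i : ℕ)) := by
  constructor
  · rintro ⟨φ, hφ, h⟩
    have hn0 : 0 < monLen v := Nat.succ_pos _
    by_cases hne : (u.1.support ∪ u.2.support).Nonempty
    · obtain ⟨k, hk, hk2⟩ := Finset.exists_mem_eq_sup _ hne id
      have hφk : φ k < monLen v := by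
        have hv : v.1 (φ k) ≠ 0 ∨ v.2 (φ k) ≠ 0 := by
          rcases Finset.mem_union.mp hk with h1 | h1
          · left; have h2 := (h k).1
            have hu := Finsupp.mem_support_iff.mp h1; omega
          · right; have h2 := (h k).2
            have hu := Finsupp.mem_support_iff.mp h1; omega
        have hmem : φ k ∈ v.1.support ∪ v.2.support := by
          rcases hv with h1 | h1
          · exact Finset.mem_union_left _ (Finsupp.mem_support_iff.mpr h1)
          · exact Finset.mem_union_right _ (Finsupp.mem_support_iff.mpr h1)
        have := Finset.le_sup (f := id) hmem
        simp only [id] at this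
        unfold monLen; omega
      have hik : ∀ i : Fin (monLen u), (i : ℕ) ≤ k := by
        intro i
        have h2 := i.2
        unfold monLen at h2
        simp only [id] at hk2
        omega
      refine ⟨fun i => ⟨φ i, lt_of_le_of_lt (hφ.monotone (hik i)) hφk⟩,
        fun i j hij => ?_, fun i => h i⟩
      exact hφ (show (i : ℕ) < (j : ℕ) from hij)
    · have hm1 : monLen u = 1 := by
        unfold monLen
        rw [Finset.not_nonempty_iff_eq_empty.mp hne]; simp
      refine ⟨fun _ => ⟨0, hn0⟩, fun i j hij => ?_, fun i => ?_⟩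
      · exfalso
        have hi := i.2; have hj := j.2
        have : (i : ℕ) < (j : ℕ) := hij
        omega
      · have h1 : u.1 (i : ℕ) = 0 := by
          by_contra hc
          exact hne ⟨i, Finset.mem_union_left _ (Finsupp.mem_support_iff.mpr hc)⟩
        have h2 : u.2 (i : ℕ) = 0 := by
          by_contra hc
          exact hne ⟨i, Finset.mem_union_right _ (Finsupp.mem_support_iff.mpr hc)⟩
        simp [h1, h2]
  · rintro ⟨ψ, hψ, h⟩
    have hmn : monLen u ≤ monLen v := by
      have := Fintype.card_le_of_injective ψ hψ.injective
      simpa using this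
    refine ⟨fun i => if hi : i < monLen u then (ψ ⟨i, hi⟩ : ℕ)
      else monLen v - monLen u + i, fun i j hij => ?_, fun i => ?_⟩
    · by_cases hi : i < monLen u <;> by_cases hj : j < monLen u
      · simp only [dif_pos hi, dif_pos hj]
        exact hψ (show (⟨i, hi⟩ : Fin _) < ⟨j, hj⟩ from hij)
      · simp only [dif_pos hi, dif_neg hj]
        have := (ψ ⟨i, hi⟩).2; omega
      · omega
      · simp only [dif_neg hi, dif_neg hj]; omega
    · by_cases hi : i < monLen u
      · simpa only [dif_pos hi] using h ⟨i, hi⟩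
      · have hz := monLen_zero_of_le u i (le_of_not_gt hi)
        simp [hz.1, hz.2]
end
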